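/- arXiv:1805.01953 — 4 statements merged into one kernel-verified Lean document; each statement's English description precedes it below -/
import Mathlib

section
/- Every bipartite graph is good: if G is a bipartite graph, then for every connected induced subgraph H of G and every connected order O of V(H), the greedy colouring algorithm applied to (H,O) produces an optimal colouring of H. -/
open Classical in
noncomputable def greedyStep {V : Type*} (G : SimpleGraph V) (f : V → ℕ) (v : V) : V → ℕ :=
  fun u => if u = v then sInf {c : ℕ | 1 ≤ c ∧ ∀ w, G.Adj v w → f w ≠ c} else f u

noncomputable def greedyFrom {V : Type*} (G : SimpleGraph V) (f : V → ℕ) (l : List V) : V → ℕ :=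
  l.foldl (greedyStep G) f

noncomputable def greedy {V : Type*} (G : SimpleGraph V) (l : List V) : V → ℕ :=
  greedyFrom G (fun _ => 0) l

open Classical in
noncomputable def greedyStart2 {V : Type*} (G : SimpleGraph V) : List V → V → ℕ
  | [] => fun _ => 0
  | v :: rest => greedyFrom G (fun u => if u = v then 2 else 0) rest

noncomputable def chi {V : Type*} [Fintype V] (G : SimpleGraph V) : ℕ :=
  sInf {n : ℕ | G.Colorable n}

open Classical in
noncomputable def idx {V : Type*} (l : List V) (v : V) : ℕ := l.idxOf v

noncomputable def maxIdx {V : Type*} (l : List V) (A : Set V) : ℕ := sSup (idx l '' A)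
noncomputable def minIdx {V : Type*} (l : List V) (A : Set V) : ℕ := sInf (idx l '' A)

def IsConnOrder {V : Type*} (G : SimpleGraph V) (l : List V) : Prop :=
  l.Nodup ∧ (∀ v : V, v ∈ l) ∧
    ∀ i : Fin l.length, 0 < i.1 → ∃ j : Fin l.length, j.1 < i.1 ∧ G.Adj (l.get j) (l.get i)

def GoodOrder {V : Type*} [Fintype V] (G : SimpleGraph V) (l : List V) : Prop :=
  ∀ v : V, greedy G l v ≤ chi G

def Good {V : Type*} [Fintype V] (G : SimpleGraph V) : Prop :=
  ∀ s : Finset V, (G.induce (↑s : Set V)).Connected →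
    ∀ l : List ↥(↑s : Set V), IsConnOrder (G.induce (↑s : Set V)) l →
      GoodOrder (G.induce (↑s : Set V)) l

def BadOrder {V : Type*} [Fintype V] (G : SimpleGraph V) (l : List V) : Prop :=
  IsConnOrder G l ∧ ¬ GoodOrder G l

def MinimallyBad {V : Type*} [Fintype V] (G : SimpleGraph V) : Prop :=
  ¬ Good G ∧ ∀ s : Finset V, s ≠ Finset.univ →
    (G.induce (↑s : Set V)).Connected → Good (G.induce (↑s : Set V))

def IsInducedPath {V : Type*} (G : SimpleGraph V) (P : List V) : Prop :=
  P.Nodup ∧ ∀ i j : Fin P.length,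
    G.Adj (P.get i) (P.get j) ↔ (i.1 + 1 = j.1 ∨ j.1 + 1 = i.1)

def IsFlatPath {V : Type*} (G : SimpleGraph V) (P : List V) : Prop :=
  IsInducedPath G P ∧
    ∀ i : Fin P.length, 0 < i.1 → i.1 + 1 < P.length → (G.neighborSet (P.get i)).ncard = 2

def WellOrderedPath {V : Type*} (l P : List V) : Prop :=
  P.Pairwise (fun u v => idx l u < idx l v) ∨ P.Pairwise (fun u v => idx l v < idx l u)

def IsMaxFlatPath {V : Type*} (G : SimpleGraph V) (P : List V) : Prop :=
  IsFlatPath G P ∧ ∀ h : P ≠ [],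
    (G.neighborSet (P.head h)).ncard ≠ 2 ∧ (G.neighborSet (P.getLast h)).ncard ≠ 2

def ClawFree {V : Type*} (G : SimpleGraph V) : Prop :=
  ∀ a b c d : V, G.Adj a b → G.Adj a c → G.Adj a d → b ≠ c → b ≠ d → c ≠ d →
    G.Adj b c ∨ G.Adj b d ∨ G.Adj c d

def IsHole {V : Type*} (G : SimpleGraph V) (C : List V) : Prop :=
  4 ≤ C.length ∧ C.Nodup ∧
    ∀ i j : Fin C.length, G.Adj (C.get i) (C.get j) ↔
      ((i.1 + 1) % C.length = j.1 ∨ (j.1 + 1) % C.length = i.1)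

def GemFree {V : Type*} (G : SimpleGraph V) : Prop :=
  ¬ ∃ a b c d e : V, G.Adj a b ∧ G.Adj b c ∧ G.Adj c d ∧
    ¬ G.Adj a c ∧ ¬ G.Adj a d ∧ ¬ G.Adj b d ∧
    G.Adj e a ∧ G.Adj e b ∧ G.Adj e c ∧ G.Adj e d

lemma fin2_trick : ∀ a b c : Fin 2, a ≠ b → b ≠ c → a = c := by decide

lemma greedy_eq {V : Type*} (G : SimpleGraph V) (l : List V) (hnd : l.Nodup)
    (hconn : ∀ i : Fin l.length, 0 < i.1 → ∃ j : Fin l.length, j.1 < i.1 ∧ G.Adj (l.get j) (l.get i))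
    (C : G.Coloring (Fin 2)) (h0 : l ≠ []) :
    ∀ v ∈ l, greedy G l v = if C v = C (l.head h0) then 1 else 2 := by
  classical
  set σ : V → ℕ := fun v => if C v = C (l.head h0) then 1 else 2 with hσ
  have hidxget : ∀ i : Fin l.length, l.idxOf (l.get i) = i.1 := by
    intro i
    have hmem : l.get i ∈ l := List.get_mem l i
    have h1 : l.idxOf (l.get i) < l.length := List.idxOf_lt_length_iff.2 hmem
    have h2 : l.get ⟨l.idxOf (l.get i), h1⟩ = l.get i := List.idxOf_get h1
    have := (hnd.get_inj_iff (i := ⟨l.idxOf (l.get i), h1⟩) (j := i)).1 h2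
    exact congrArg Fin.val this
  have key : ∀ k, k ≤ l.length → ∀ v,
      greedyFrom G (fun _ => 0) (l.take k) v = if l.idxOf v < k then σ v else 0 := by
    intro k
    induction k with
    | zero => intro _ v; simp [greedyFrom]
    | succ k ih =>
      intro hk v
      have hk' : k < l.length := hk
      have prev := ih (le_of_lt hk')
      have htake : l.take (k+1) = l.take k ++ [l.get ⟨k, hk'⟩] := by
        rw [List.take_succ]
        simp [List.getElem?_eq_getElem hk', List.get_eq_getElem]
      have hfold : greedyFrom G (fun _ => 0) (l.take (k+1))
          = greedyStep G (greedyFrom G (fun _ => 0) (l.take k)) (l.get ⟨k, hk'⟩) := by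
        rw [greedyFrom, htake, List.foldl_append]; rfl
      rw [hfold]
      set vk := l.get ⟨k, hk'⟩ with hvk
      have hidxvk : l.idxOf vk = k := hidxget ⟨k, hk'⟩
      by_cases hv : v = vk
      · subst hv
        rw [greedyStep]
        simp only [if_pos rfl, if_pos (show l.idxOf vk < k + 1 by omega)]
        set f := greedyFrom G (fun _ => 0) (l.take k) with hf
        have hprev : ∀ w, f w = if l.idxOf w < k then σ w else 0 := prev
        have hadjf : ∀ w, G.Adj vk w → f w ≠ σ vk := by
          intro w hadj
          rw [hprev w]
          by_cases hw : l.idxOf w < k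
          · rw [if_pos hw]
            have hCw : C w ≠ C vk := C.valid hadj.symm
            by_cases h1 : C vk = C (l.head h0)
            · have h2 : C w ≠ C (l.head h0) := fun h => hCw (h.trans h1.symm)
              simp [hσ, h1, h2]
            · have h2 : C w = C (l.head h0) := fin2_trick _ _ _ hCw h1
              simp [hσ, h1, h2]
          · rw [if_neg hw]
            by_cases h1 : C vk = C (l.head h0) <;> simp [hσ, h1]
        have hmemσ : σ vk ∈ {c : ℕ | 1 ≤ c ∧ ∀ w, G.Adj vk w → f w ≠ c} := by
          refine ⟨?_, fun w hadj => hadjf w hadj⟩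
          simp only [hσ]; split <;> omega
        refine le_antisymm (Nat.sInf_le hmemσ) ?_
        by_cases h1 : C vk = C (l.head h0)
        · have hσ1 : σ vk = 1 := by simp [hσ, h1]
          rw [hσ1]
          exact le_csInf ⟨_, hmemσ⟩ (fun b hb => hb.1)
        · have hσ2 : σ vk = 2 := by simp [hσ, h1]
          have hkpos : 0 < k := by
            by_contra h
            have hk0 : k = 0 := by omega
            apply h1
            have : vk = l.head h0 := by
              rw [hvk, List.head_eq_getElem_zero h0]
              simp [hk0, List.get_eq_getElem]
            rw [this]
          obtain ⟨j, hj, hadj⟩ := hconn ⟨k, hk'⟩ hkpos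
          have hadj' : G.Adj (l.get j) vk := by rw [hvk]; exact hadj
          have hwj : f (l.get j) = 1 := by
            rw [hprev, hidxget j, if_pos hj]
            have hCj : C (l.get j) ≠ C vk := C.valid hadj'
            have h2 : C (l.get j) = C (l.head h0) := fin2_trick _ _ _ hCj h1
            simp [hσ, List.get_eq_getElem] at h2 ⊢
            simp [h2]
          rw [hσ2]
          refine le_csInf ⟨_, hmemσ⟩ (fun b hb => ?_)
          obtain ⟨hb1, hb2⟩ := hb
          have := hb2 (l.get j) hadj'.symm
          rw [hwj] at this
          omega
      · rw [greedyStep]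
        simp only [if_neg hv]
        rw [prev v]
        have hne : l.idxOf v ≠ k := by
          intro h
          have h1 : l.idxOf v < l.length := h ▸ hk'
          have h2 := List.idxOf_get h1
          apply hv
          rw [← h2, hvk]
          congr 1
          exact Fin.ext h
        by_cases h2 : l.idxOf v < k
        · rw [if_pos h2, if_pos (by omega)]
        · rw [if_neg h2, if_neg (by omega)]
  intro v hv
  have hlen : l.idxOf v < l.length := List.idxOf_lt_length_iff.2 hv
  have h := key l.length le_rfl v
  rw [List.take_length] at h
  rw [greedy] at *
  rw [h, if_pos hlen]

/-- Every bipartite graph is good. -/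
theorem stmt0 {V : Type*} [Fintype V] (G : SimpleGraph V) (hbip : G.Colorable 2) :
    Good G := by
  intro s hsconn l hl
  have hH2 : (G.induce (↑s : Set V)).Colorable 2 :=
    SimpleGraph.Colorable.of_hom (SimpleGraph.Embedding.induce _).toHom hbip
  classical
  obtain ⟨C⟩ := id hH2
  intro v
  obtain ⟨hnd, hall, hco⟩ := hl
  have hv := hall v
  have h0 : l ≠ [] := List.ne_nil_of_mem hv
  rw [greedy_eq _ l hnd hco C h0 v hv]
  have hne : {n : ℕ | (G.induce (↑s : Set V)).Colorable n}.Nonempty := ⟨2, hH2⟩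
  by_cases h1 : C v = C (l.head h0)
  · rw [if_pos h1]
    refine le_csInf hne (fun n hn => ?_)
    rcases n with _ | n
    · exact ((hn.some v).elim0)
    · omega
  · rw [if_neg h1]
    have hvne : v ≠ l.head h0 := fun h => h1 (by rw [h])
    have hlen : l.idxOf v < l.length := List.idxOf_lt_length_iff.2 hv
    have hpos : 0 < l.idxOf v := by
      rcases Nat.eq_zero_or_pos (l.idxOf v) with h | h
      · exfalso
        apply hvne
        have h2 := List.idxOf_get hlen
        rw [← h2, List.head_eq_getElem_zero h0]
        simp [h, List.get_eq_getElem]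
      · exact h
    obtain ⟨j, hj, hadj⟩ := hco ⟨l.idxOf v, hlen⟩ hpos
    refine le_csInf hne (fun n hn => ?_)
    rcases n with _ | _ | n
    · exact ((hn.some v).elim0)
    · have := hn.some.valid hadj
      exact absurd (Subsingleton.elim (α := Fin 1) _ _) this
    · omega
end

section
/- Let G be a good connected graph with at least two vertices and let O = [v_1,…,v_n] be a connected order of V(G). Then the greedy colouring algorithm starting with colour 2 applied to (G,O) (i.e., v_1 receives colour 2, and each subsequent vertex receives the smallest positive integer not used by its already-coloured neighbours) produces an optimal colouring of G: every vertex receives a colour at most χ(G). -/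
section Aux

variable {V : Type*} [Fintype V] (G : SimpleGraph V)

/-- inclusion of `V` into the subtype of `univ`. -/
def toS (v : V) : ↥((↑(Finset.univ : Finset V)) : Set V) := ⟨v, by simp⟩

lemma toS_inj : Function.Injective (toS (V := V)) := fun a b h => congrArg Subtype.val h

lemma toS_val (x : ↥((↑(Finset.univ : Finset V)) : Set V)) : toS x.1 = x := Subtype.ext rfl

lemma greedyStep_map (f : V → ℕ) (g : ↥((↑(Finset.univ : Finset V)) : Set V) → ℕ)
    (h : ∀ v, g (toS v) = f v) (a u : V) :
    greedyStep (G.induce ((↑(Finset.univ : Finset V)) : Set V)) g (toS a) (toS u)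
      = greedyStep G f a u := by
  unfold greedyStep
  by_cases hu : u = a
  · rw [if_pos (by rw [hu]), if_pos hu]
    congr 1
    ext c
    simp only [Set.mem_setOf_eq]
    constructor
    · rintro ⟨h1, h2⟩
      refine ⟨h1, fun w hw hc => ?_⟩
      exact h2 (toS w) hw (by rw [h w]; exact hc)
    · rintro ⟨h1, h2⟩
      refine ⟨h1, fun w hw hc => ?_⟩
      have : g (toS w.1) = f w.1 := h w.1
      rw [toS_val] at this
      exact h2 w.1 hw (this ▸ hc)
  · rw [if_neg (fun hh => hu (toS_inj hh)), if_neg hu, h u]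

lemma greedyFrom_map : ∀ (l : List V) (f : V → ℕ)
    (g : ↥((↑(Finset.univ : Finset V)) : Set V) → ℕ), (∀ v, g (toS v) = f v) →
    ∀ v, greedyFrom (G.induce ((↑(Finset.univ : Finset V)) : Set V)) g (l.map toS) (toS v)
      = greedyFrom G f l v := by
  intro l
  induction l with
  | nil => intro f g h v; exact h v
  | cons a t ih =>
    intro f g h v
    simp only [List.map_cons, greedyFrom, List.foldl_cons]
    exact ih (greedyStep G f a) _ (fun u => greedyStep_map G f g h a u) v

lemma greedy_map (l : List V) (v : V) :
    greedy (G.induce ((↑(Finset.univ : Finset V)) : Set V)) (l.map toS) (toS v)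
      = greedy G l v :=
  greedyFrom_map G l (fun _ => 0) (fun _ => 0) (fun _ => rfl) v

lemma chi_induce_univ :
    chi (G.induce ((↑(Finset.univ : Finset V)) : Set V)) = chi G := by
  unfold chi
  congr 1
  ext n
  simp only [Set.mem_setOf_eq]
  constructor
  · rintro ⟨C⟩
    exact ⟨SimpleGraph.Coloring.mk (fun v => C (toS v)) (fun {v w} hvw => C.valid hvw)⟩
  · rintro ⟨C⟩
    exact ⟨SimpleGraph.Coloring.mk (fun x => C x.1) (fun {x y} hxy => C.valid hxy)⟩

lemma connected_induce_univ (hconn : G.Connected) :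
    (G.induce ((↑(Finset.univ : Finset V)) : Set V)).Connected := by
  refine SimpleGraph.Connected.map ⟨toS, fun h => h⟩ (fun x => ⟨x.1, toS_val x⟩) hconn

lemma nat_sInf_pair {A : Set ℕ} {m : ℕ} (hm : m ∈ A) (hlb : ∀ c ∈ A, m ≤ c) :
    sInf A = m :=
  le_antisymm (Nat.sInf_le hm) (le_csInf ⟨m, hm⟩ hlb)

end Aux


lemma get_swap {A : Type*} (a b : A) (t : List A) {n : ℕ} (hn : 2 ≤ n)
    (h1 : n < (b :: a :: t).length) (h2 : n < (a :: b :: t).length) :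
    (b :: a :: t).get ⟨n, h1⟩ = (a :: b :: t).get ⟨n, h2⟩ := by
  obtain ⟨k, rfl⟩ : ∃ k, n = k + 2 := ⟨n - 2, by omega⟩
  rfl

/-- greedy starting with colour 2 on a good connected graph is optimal. -/
theorem stmt1 {V : Type*} [Fintype V] (G : SimpleGraph V)
    (hgood : Good G) (hconn : G.Connected) (hcard : 2 ≤ Fintype.card V)
    (l : List V) (hl : IsConnOrder G l) :
    ∀ v : V, greedyStart2 G l v ≤ chi G := by
  classical
  obtain ⟨hnd, hmem, hadj⟩ := hl
  have hlen : 2 ≤ l.length := by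
    have h1 : l.toFinset = Finset.univ := Finset.eq_univ_iff_forall.mpr
      (fun v => List.mem_toFinset.mpr (hmem v))
    have h2 : l.toFinset.card = l.length := List.toFinset_card_of_nodup hnd
    have h3 : Fintype.card V = l.length := by
      rw [← Finset.card_univ (α := V), h1.symm]
      exact h2
    omega
  match l, hnd, hmem, hadj, hlen with
  | v1 :: v2 :: rest, hnd, hmem, hadj, hlen =>
  -- v1 adjacent v2
  have h12 : G.Adj v1 v2 := by
    obtain ⟨j, hj, hja⟩ := hadj ⟨1, by simp⟩ (by norm_num)
    have hj' : j.1 < 1 := hj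
    have hj0 : j = ⟨0, by simp⟩ := Fin.ext (show j.1 = 0 by omega)
    rw [hj0] at hja
    exact hja
  have hne : v1 ≠ v2 := by
    intro h
    simp [List.nodup_cons, h] at hnd
  -- the swapped order
  set l' : List V := v2 :: v1 :: rest with hl'
  have hperm : (v1 :: v2 :: rest).Perm l' := List.Perm.swap v2 v1 rest
  have hnd' : l'.Nodup := hperm.nodup_iff.mp hnd
  have hmem' : ∀ v : V, v ∈ l' := fun v => hperm.mem_iff.mp (hmem v)
  have hadj' : ∀ i : Fin l'.length, 0 < i.1 →
      ∃ j : Fin l'.length, j.1 < i.1 ∧ G.Adj (l'.get j) (l'.get i) := by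
    intro i hi
    rcases Nat.lt_or_ge i.1 2 with h2 | h2
    · -- i.1 = 1
      have hi1 : i.1 = 1 := by omega
      refine ⟨⟨0, by simp [hl']⟩, show (0:ℕ) < i.1 from hi, ?_⟩
      have : i = (⟨1, by simp [hl']⟩ : Fin l'.length) := Fin.ext (show i.1 = 1 from hi1)
      rw [this]
      exact h12.symm
    · have hilen : i.1 < (v1 :: v2 :: rest).length := by
        have := i.2
        simpa [hl'] using this
      obtain ⟨j, hj, hja⟩ := hadj ⟨i.1, hilen⟩ (show (0:ℕ) < i.1 from hi)
      have hj0 : (j.1 : ℕ) < i.1 := hj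
      have hgeti : l'.get i = (v1 :: v2 :: rest).get ⟨i.1, hilen⟩ :=
        get_swap v1 v2 rest h2 i.2 hilen
      rcases Nat.lt_or_ge j.1 2 with hj2 | hj2
      · rcases Nat.lt_or_ge j.1 1 with hj1 | hj1
        · -- j = 0, vertex v1, which is at position 1 in l'
          refine ⟨⟨1, by simp [hl']⟩, show (1:ℕ) < i.1 by omega, ?_⟩
          have hje : j = ⟨0, by simp⟩ := Fin.ext (show j.1 = 0 by omega)
          rw [hje] at hja
          rw [hgeti]
          exact hja
        · -- j = 1, vertex v2, at position 0 in l'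
          refine ⟨⟨0, by simp [hl']⟩, show (0:ℕ) < i.1 from hi, ?_⟩
          have hje : j = ⟨1, by simp⟩ := Fin.ext (show j.1 = 1 by omega)
          rw [hje] at hja
          rw [hgeti]
          exact hja
      · refine ⟨⟨j.1, by simpa [hl'] using j.2⟩, show j.1 < i.1 from hj0, ?_⟩
        have hgetj : l'.get ⟨j.1, by simpa [hl'] using j.2⟩
            = (v1 :: v2 :: rest).get ⟨j.1, j.2⟩ :=
          get_swap v1 v2 rest hj2 _ _
        rw [hgeti, hgetj]
        exact hja
  -- greedy computations
  have hg1 : greedyStep G (fun u => if u = v1 then 2 else 0) v2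
      = fun u => if u = v2 then 1 else if u = v1 then 2 else 0 := by
    funext u
    unfold greedyStep
    by_cases h : u = v2
    · simp only [if_pos h]
      have h1 : (1 : ℕ) ∈ {c : ℕ | 1 ≤ c ∧ ∀ w, G.Adj v2 w → (if w = v1 then 2 else 0) ≠ c} :=
        ⟨le_refl 1, fun w _ => by split <;> omega⟩
      exact nat_sInf_pair h1 (fun c hc => hc.1)
    · simp only [if_neg h]
  have hf1 : greedyStep G (fun _ => 0) v2 = fun u => if u = v2 then 1 else 0 := by
    funext u
    unfold greedyStep
    by_cases h : u = v2
    · simp only [if_pos h]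
      have h1 : (1 : ℕ) ∈ {c : ℕ | 1 ≤ c ∧ ∀ w, G.Adj v2 w → (0 : ℕ) ≠ c} :=
        ⟨le_refl 1, fun w _ => by omega⟩
      exact nat_sInf_pair h1 (fun c hc => hc.1)
    · simp only [if_neg h]
  have hf2 : greedyStep G (fun u => if u = v2 then 1 else 0) v1
      = fun u => if u = v1 then 2 else if u = v2 then 1 else 0 := by
    funext u
    unfold greedyStep
    by_cases h : u = v1
    · simp only [if_pos h]
      have h2mem : (2 : ℕ) ∈ {c : ℕ | 1 ≤ c ∧ ∀ w, G.Adj v1 w → (if w = v2 then 1 else 0) ≠ c} :=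
        ⟨by norm_num, fun w _ => by split <;> omega⟩
      refine nat_sInf_pair h2mem (fun c hc => ?_)
      have hc' : 1 ≤ c ∧ ∀ w, G.Adj v1 w → (if w = v2 then 1 else 0) ≠ c := hc
      have hc1 := hc'.1
      have hcv := hc'.2 v2 h12
      simp at hcv
      omega
    · simp only [if_neg h]
  have hfun : (fun u => if u = v2 then (1 : ℕ) else if u = v1 then 2 else 0)
      = fun u => if u = v1 then 2 else if u = v2 then 1 else 0 := by
    funext u
    by_cases h1 : u = v1
    · by_cases h2 : u = v2
      · exact absurd (h1 ▸ h2) hne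
      · simp [h1, h2, hne]
    · by_cases h2 : u = v2 <;> simp [h1, h2, Ne.symm hne]
  have hkey : greedyStart2 G (v1 :: v2 :: rest) = greedy G l' := by
    show greedyFrom G (fun u => if u = v1 then 2 else 0) (v2 :: rest)
      = greedyFrom G (fun _ => 0) (v2 :: v1 :: rest)
    unfold greedyFrom
    simp only [List.foldl_cons]
    rw [hg1, hf1, hf2, hfun]
  -- apply goodness to the universe
  have hconnS := connected_induce_univ G hconn
  have hco' : IsConnOrder (G.induce ((↑(Finset.univ : Finset V)) : Set V)) (l'.map toS) := by
    refine ⟨List.Nodup.map toS_inj hnd', fun x => ?_, ?_⟩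
    · exact List.mem_map.mpr ⟨x.1, hmem' x.1, toS_val x⟩
    · intro i hi
      have hlenm : (l'.map toS).length = l'.length := List.length_map _
      obtain ⟨j, hj, hja⟩ := hadj' ⟨i.1, by rw [← hlenm]; exact i.2⟩ hi
      refine ⟨⟨j.1, by rw [hlenm]; exact j.2⟩, hj, ?_⟩
      have e1 : (l'.map toS).get ⟨j.1, by rw [hlenm]; exact j.2⟩ = toS (l'.get j) := by
        simp
      have e2 : (l'.map toS).get i = toS (l'.get ⟨i.1, by rw [← hlenm]; exact i.2⟩) := by
        simp
      rw [e1, e2]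
      exact hja
  have hgo := hgood Finset.univ hconnS (l'.map toS) hco'
  intro v
  have h1 : greedyStart2 G (v1 :: v2 :: rest) v = greedy G l' v := by rw [hkey]
  have h2 : greedy G l' v
      = greedy (G.induce ((↑(Finset.univ : Finset V)) : Set V)) (l'.map toS) (toS v) :=
    (greedy_map G l' v).symm
  have h3 := hgo (toS v)
  rw [h1, h2, ← chi_induce_univ G]
  exact h3
end

section
/- Let G be a minimally bad graph and O = [v_1,…,v_n] a bad connected order of G, with greedy colouring π = π_{G,O}. Then for every vertex x ∈ V(G) with x ≠ v_n one has π(x) ≤ χ(G), and π(v_n) = χ(G) + 1. -/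
section AuxStmt2

variable {V : Type*}

lemma greedyFrom_append' (G : SimpleGraph V) (f : V → ℕ) (l₁ l₂ : List V) :
    greedyFrom G f (l₁ ++ l₂) = greedyFrom G (greedyFrom G f l₁) l₂ := by
  simp [greedyFrom, List.foldl_append]

lemma greedyFrom_cons' (G : SimpleGraph V) (f : V → ℕ) (v : V) (t : List V) :
    greedyFrom G f (v :: t) = greedyFrom G (greedyStep G f v) t := rfl

lemma greedyStep_ne' (G : SimpleGraph V) (f : V → ℕ) {v u : V} (h : u ≠ v) :
    greedyStep G f v u = f u := by
  simp [greedyStep, h]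

lemma greedy_induce_aux (G : SimpleGraph V) (s : Set V) :
    ∀ (t : List V) (ht : ∀ x ∈ t, x ∈ s) (f : V → ℕ) (f' : ↥s → ℕ),
      (∀ x : ↥s, f' x = f x.val) → (∀ x, x ∉ s → f x = 0) →
    (∀ x : ↥s, greedyFrom (G.induce s) f' (t.attachWith (· ∈ s) ht) x = greedyFrom G f t x.val)
      ∧ ∀ x, x ∉ s → greedyFrom G f t x = 0 := by
  intro t
  induction t with
  | nil =>
    intro ht f f' hf h0
    exact ⟨hf, h0⟩
  | cons v tl ih =>
    intro ht f f' hf h0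
    have hv : v ∈ s := ht v (by simp)
    rw [List.attachWith_cons, greedyFrom_cons', greedyFrom_cons']
    refine ih (fun x hx => ht x (by simp [hx])) (greedyStep G f v)
      (greedyStep (G.induce s) f' ⟨v, hv⟩) ?_ ?_
    · intro x
      have hsets : {c : ℕ | 1 ≤ c ∧ ∀ w : ↥s, (G.induce s).Adj ⟨v, hv⟩ w → f' w ≠ c}
          = {c : ℕ | 1 ≤ c ∧ ∀ w, G.Adj v w → f w ≠ c} := by
        ext c
        simp only [Set.mem_setOf_eq]
        constructor
        · rintro ⟨hc1, hc2⟩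
          refine ⟨hc1, fun w hw => ?_⟩
          by_cases hws : w ∈ s
          · have := hc2 ⟨w, hws⟩ (by simpa using hw)
            rwa [hf ⟨w, hws⟩] at this
          · rw [h0 w hws]
            omega
        · rintro ⟨hc1, hc2⟩
          refine ⟨hc1, fun w hw => ?_⟩
          rw [hf w]
          exact hc2 w.val (by simpa using hw)
      by_cases hx : x.val = v
      · have hx' : x = ⟨v, hv⟩ := Subtype.ext hx
        simp only [greedyStep, hx', if_pos rfl, hx, hsets]
        simp
      · have hx' : x ≠ ⟨v, hv⟩ := fun h => hx (congrArg Subtype.val h)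
        rw [greedyStep_ne' _ _ hx', greedyStep_ne' _ _ hx]
        exact hf x
    · intro x hx
      have hxv : x ≠ v := fun h => hx (h ▸ hv)
      rw [greedyStep_ne' _ _ hxv]
      exact h0 x hx

lemma connected_of_isConnOrder (G : SimpleGraph V) (l : List V)
    (h : IsConnOrder G l) (hne : l ≠ []) : G.Connected := by
  have hlen : 0 < l.length := List.length_pos_iff.mpr hne
  have key : ∀ n : ℕ, ∀ i : Fin l.length, i.1 ≤ n →
      G.Reachable (l.get ⟨0, hlen⟩) (l.get i) := by
    intro n
    induction n with
    | zero =>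
      intro i hi
      have : i = ⟨0, hlen⟩ := Fin.ext (Nat.le_zero.mp hi)
      rw [this]
    | succ n ih =>
      intro i hi
      rcases Nat.eq_zero_or_pos i.1 with h0 | h0
      · have : i = ⟨0, hlen⟩ := Fin.ext h0
        rw [this]
      · obtain ⟨j, hj, hadj⟩ := h.2.2 i h0
        exact (ih j (by omega)).trans hadj.reachable
  rw [SimpleGraph.connected_iff]
  constructor
  · intro u v
    obtain ⟨iu, hiu⟩ := List.get_of_mem (h.2.1 u)
    obtain ⟨iv, hiv⟩ := List.get_of_mem (h.2.1 v)
    exact (hiu ▸ key iu.1 iu le_rfl).symm.trans (hiv ▸ key iv.1 iv le_rfl)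
  · exact ⟨l.get ⟨0, hlen⟩⟩

lemma chi_colorable [Fintype V] (G : SimpleGraph V) : G.Colorable (chi G) := by
  have hne : {n : ℕ | G.Colorable n}.Nonempty := by
    exact ⟨Fintype.card V, G.colorable_of_fintype⟩
  exact Nat.sInf_mem hne

lemma chi_pos [Fintype V] [Nonempty V] (G : SimpleGraph V) : 1 ≤ chi G := by
  by_contra h
  have h0 : chi G = 0 := by omega
  obtain ⟨C⟩ := chi_colorable G
  rw [h0] at C
  exact Fin.elim0 (C (Classical.arbitrary V))

lemma chi_induce_le [Fintype V] (G : SimpleGraph V) (s : Set V) [Fintype ↥s] :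
    chi (G.induce s) ≤ chi G :=
  Nat.sInf_le (SimpleGraph.Colorable.of_hom (SimpleGraph.Embedding.induce s).toHom (chi_colorable G))

lemma isConnOrder_induce_attachWith (G : SimpleGraph V) (s : Set V) (t : List V)
    (ht : ∀ x ∈ t, x ∈ s) (hnd : t.Nodup) (hsurj : ∀ v : ↥s, v.val ∈ t)
    (hc : ∀ i : Fin t.length, 0 < i.1 →
      ∃ j : Fin t.length, j.1 < i.1 ∧ G.Adj (t.get j) (t.get i)) :
    IsConnOrder (G.induce s) (t.attachWith (· ∈ s) ht) := by
  refine ⟨?_, ?_, ?_⟩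
  · apply List.Nodup.of_map Subtype.val
    rw [List.attachWith_map_subtype_val]
    exact hnd
  · intro v
    have : v.val ∈ (t.attachWith (· ∈ s) ht).map Subtype.val := by
      rw [List.attachWith_map_subtype_val]; exact hsurj v
    obtain ⟨y, hy, hyv⟩ := List.mem_map.mp this
    exact (Subtype.ext hyv) ▸ hy
  · intro i hi
    have hlen : (t.attachWith (· ∈ s) ht).length = t.length := List.length_attachWith
    have hi' : i.1 < t.length := hlen ▸ i.2
    obtain ⟨j, hj, hadj⟩ := hc ⟨i.1, hi'⟩ hi
    refine ⟨⟨j.1, by omega⟩, hj, ?_⟩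
    simp only [List.get_eq_getElem, List.getElem_attachWith, SimpleGraph.comap_adj,
      Function.Embedding.coe_subtype]
    simpa using hadj

end AuxStmt2

theorem stmt2 {V : Type*} [Fintype V] (G : SimpleGraph V) (l : List V)
    (hmin : MinimallyBad G) (hbad : BadOrder G l)
    (vn : V) (hvn : l.getLast? = some vn) :
    (∀ x : V, x ≠ vn → greedy G l x ≤ chi G) ∧ greedy G l vn = chi G + 1 := by
  classical
  have hne : l ≠ [] := by rintro rfl; simp at hvn
  have hlenpos : 0 < l.length := List.length_pos_iff.mpr hne
  have hvnl : vn = l.getLast hne := by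
    rw [List.getLast?_eq_getLast hne] at hvn
    exact (Option.some_inj.mp hvn).symm
  set l' := l.dropLast with hl'
  have hdecomp : l' ++ [vn] = l := by rw [hvnl]; exact List.dropLast_append_getLast hne
  obtain ⟨⟨hnd, hall, hconn⟩, hnotgood⟩ := hbad
  have hnonempty : Nonempty V := ⟨vn⟩
  have hndl : (l' ++ [vn]).Nodup := hdecomp ▸ hnd
  have hvnotl' : vn ∉ l' := fun hmem =>
    (List.disjoint_of_nodup_append hndl) hmem (by simp)
  have hndl' : l'.Nodup := (List.nodup_append.mp hndl).1
  have hmem_l' : ∀ x : V, x ≠ vn → x ∈ l' := by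
    intro x hx
    have hx2 := hall x
    rw [← hdecomp, List.mem_append] at hx2
    rcases hx2 with h | h
    · exact h
    · simp at h; exact absurd h hx
  have hstepeq : greedy G l = greedyStep G (greedy G l') vn := by
    conv_lhs => rw [greedy, ← hdecomp, greedyFrom_append']
    rfl
  have hx_step : ∀ x : V, x ≠ vn → greedy G l x = greedy G l' x := by
    intro x hx; rw [hstepeq, greedyStep_ne' _ _ hx]
  have hchipos : 1 ≤ chi G := chi_pos G
  by_cases hl'ne : l' = []
  · -- degenerate case: V = {vn}, contradiction with badness
    exfalso
    apply hnotgood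
    intro v
    have hv : v = vn := by
      by_contra h
      exact (List.not_mem_nil (a := v)) (hl'ne ▸ hmem_l' v h)
    rw [hv, hstepeq]
    have h1 : greedyStep G (greedy G l') vn vn ≤ 1 := by
      rw [greedyStep, if_pos rfl]
      apply Nat.sInf_le
      refine ⟨le_rfl, fun w hw => ?_⟩
      rw [hl'ne]
      simp [greedy, greedyFrom]
    omega
  have hl'pos : 0 < l'.length := List.length_pos_iff.mpr hl'ne
  have hlenl : l.length = l'.length + 1 := by rw [← hdecomp]; simp
  -- prefix connectivity of l' in G
  have hget' : ∀ (k : ℕ) (hk : k < l'.length) (hk2 : k < l.length),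
      l.get ⟨k, hk2⟩ = l'.get ⟨k, hk⟩ := by
    intro k hk hk2
    simp only [List.get_eq_getElem]
    rw [List.getElem_of_eq hdecomp.symm hk2]
    exact List.getElem_append_left hk
  have hc' : ∀ i : Fin l'.length, 0 < i.1 →
      ∃ j : Fin l'.length, j.1 < i.1 ∧ G.Adj (l'.get j) (l'.get i) := by
    intro i hi
    obtain ⟨j, hj, hadj⟩ := hconn ⟨i.1, by omega⟩ hi
    have hj' : j.1 < l'.length := by
      have := i.2; have := j.2; omega
    refine ⟨⟨j.1, hj'⟩, hj, ?_⟩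
    rw [← hget' j.1 hj' (by omega), ← hget' i.1 i.2 (by omega)]
    exact hadj
  -- the induced subgraph on V \ {vn}
  set s : Finset V := Finset.univ.erase vn with hs
  have hs_ne : s ≠ Finset.univ := by
    intro h
    have h2 : vn ∈ s := h ▸ Finset.mem_univ vn
    simp [hs] at h2
  have hSmem : ∀ x : V, x ∈ (↑s : Set V) ↔ x ≠ vn := by
    intro x; simp [hs]
  have hl'S : ∀ x ∈ l', x ∈ (↑s : Set V) :=
    fun x hx => (hSmem x).mpr (fun h => hvnotl' (h ▸ hx))
  set H := G.induce (↑s : Set V) with hH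
  set l'' := l'.attachWith (· ∈ (↑s : Set V)) hl'S with hl''
  obtain ⟨htr, -⟩ := greedy_induce_aux G (↑s : Set V) l' hl'S (fun _ => 0) (fun _ => 0)
    (fun _ => rfl) (fun _ _ => rfl)
  have hsurj : ∀ v : ↥(↑s : Set V), v.val ∈ l' :=
    fun v => hmem_l' v.val ((hSmem v.val).mp v.2)
  have hco'' : IsConnOrder H l'' :=
    isConnOrder_induce_attachWith G _ l' hl'S hndl' hsurj hc'
  have hlen'' : l''.length = l'.length := List.length_attachWith
  have hl''ne : l'' ≠ [] := by
    intro h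
    have := congrArg List.length h
    rw [hlen''] at this
    exact hl'ne (List.length_eq_zero_iff.mp this)
  have hconnH : H.Connected := connected_of_isConnOrder H l'' hco'' hl''ne
  have hgood : Good H := hmin.2 s hs_ne hconnH
  -- apply goodness via the universe finset of the subtype
  have hl''univ : ∀ x ∈ l'', x ∈ (↑(Finset.univ : Finset ↥(↑s : Set V)) :
      Set ↥(↑s : Set V)) := by intro x _; simp
  have hsurj2 : ∀ v : ↥(↑(Finset.univ : Finset ↥(↑s : Set V)) : Set ↥(↑s : Set V)),
      v.val ∈ l'' := fun v => hco''.2.1 v.val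
  have hco2 : IsConnOrder (H.induce _) (l''.attachWith _ hl''univ) :=
    isConnOrder_induce_attachWith H _ l'' hl''univ hco''.1 hsurj2 hco''.2.2
  have hl2ne : l''.attachWith _ hl''univ ≠ [] := by
    intro h
    have := congrArg List.length h
    rw [List.length_attachWith] at this
    exact hl''ne (List.length_eq_zero_iff.mp this)
  have hconn2 := connected_of_isConnOrder _ _ hco2 hl2ne
  have hgo := hgood Finset.univ hconn2 _ hco2
  obtain ⟨htr2, -⟩ := greedy_induce_aux H
    (↑(Finset.univ : Finset ↥(↑s : Set V)) : Set ↥(↑s : Set V)) l'' hl''univ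
    (fun _ => 0) (fun _ => 0) (fun _ => rfl) (fun _ _ => rfl)
  -- greedy of H on l'' is bounded by chi G
  have hHbound : ∀ w : ↥(↑s : Set V), greedy H l'' w ≤ chi G := by
    intro w
    have hw : w ∈ (↑(Finset.univ : Finset ↥(↑s : Set V)) : Set ↥(↑s : Set V)) := by simp
    have e1 := htr2 ⟨w, hw⟩
    have e2 := hgo ⟨w, hw⟩
    rw [show greedy (H.induce _) (l''.attachWith _ hl''univ) ⟨w, hw⟩ =
      greedyFrom (H.induce _) (fun _ => 0) (l''.attachWith _ hl''univ) ⟨w, hw⟩ from rfl,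
      e1] at e2
    calc greedy H l'' w = greedyFrom H (fun _ => 0) l'' w := rfl
      _ ≤ chi (H.induce _) := e2
      _ ≤ chi H := chi_induce_le H _
      _ ≤ chi G := chi_induce_le G _
  -- part 1
  have part1 : ∀ x : V, x ≠ vn → greedy G l x ≤ chi G := by
    intro x hx
    have hxS : x ∈ (↑s : Set V) := (hSmem x).mpr hx
    have e1 := htr ⟨x, hxS⟩
    rw [hx_step x hx]
    calc greedy G l' x = greedyFrom G (fun _ => 0) l' x := rfl
      _ = greedyFrom H (fun _ => 0) l'' ⟨x, hxS⟩ := e1.symm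
      _ = greedy H l'' ⟨x, hxS⟩ := rfl
      _ ≤ chi G := hHbound ⟨x, hxS⟩
  refine ⟨part1, ?_⟩
  -- part 2
  have hub : greedy G l vn ≤ chi G + 1 := by
    rw [hstepeq, greedyStep, if_pos rfl]
    apply Nat.sInf_le
    refine ⟨by omega, fun w hw => ?_⟩
    have hwvn : w ≠ vn := fun h => (G.irrefl (h ▸ hw))
    have := part1 w hwvn
    rw [hx_step w hwvn] at this
    omega
  have hlb : chi G < greedy G l vn := by
    rw [GoodOrder] at hnotgood
    push_neg at hnotgood
    obtain ⟨v, hv⟩ := hnotgood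
    have hveq : v = vn := by
      by_contra h
      exact absurd (part1 v h) (not_le.mpr hv)
    exact hveq ▸ hv
  omega
end

section
/- Let G be a minimally bad graph and O = [v_1,…,v_n] a bad connected order of G. Let v ∈ V(G) and let S be a cutset of the induced subgraph G_{≤v}. If there exists a connected component C of G_{≤v}∖S such that min(C) < min(S), then v_1 ∈ C. -/
theorem idx_eq_indexOf' {V : Type*} [DecidableEq V] (l : List V) (u : V) :
    idx l u = l.idxOf u := by
  unfold idx; congr!

theorem stmt8 {V : Type*} [Fintype V] (G : SimpleGraph V) (l : List V)
    (hmin : MinimallyBad G) (hbad : BadOrder G l)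
    (v1 : V) (hv1 : l.head? = some v1)
    (v : V) (A : Set V) (hA : A = {u : V | idx l u ≤ idx l v})
    (S : Finset V) (hS : (↑S : Set V) ⊆ A)
    (hcut : ¬ (G.induce (A \ (↑S : Set V))).Preconnected)
    (c : (G.induce (A \ (↑S : Set V))).ConnectedComponent)
    (hlt : minIdx l (Subtype.val '' c.supp) < minIdx l (↑S : Set V)) :
    v1 ∈ Subtype.val '' c.supp := by
  classical
  obtain ⟨hconn, -⟩ := hbad
  obtain ⟨hnd, hmem, hstep⟩ := hconn
  unfold minIdx at hlt
  obtain ⟨u0, hu0⟩ := c.exists_rep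
  have hne : (idx l '' (Subtype.val '' c.supp)).Nonempty :=
    ⟨idx l u0.1, ⟨u0.1, ⟨u0, by rw [SimpleGraph.ConnectedComponent.mem_supp_iff]; exact hu0, rfl⟩, rfl⟩⟩
  obtain ⟨u, huC, hidxu⟩ := Nat.sInf_mem hne
  obtain ⟨u', hu'C, rfl⟩ := huC
  have hul : u'.1 ∈ l := hmem u'.1
  have hulen : idx l u'.1 < l.length := by
    rw [idx_eq_indexOf']; exact List.idxOf_lt_length_iff.2 hul
  by_cases h0 : idx l u'.1 = 0
  · have h0' : List.idxOf u'.1 l = 0 := by rw [← idx_eq_indexOf']; exact h0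
    refine ⟨u', hu'C, ?_⟩
    cases l with
    | nil => simp at hul
    | cons a t =>
      have hua : u'.1 = a := by
        by_contra hne2
        rw [List.idxOf_cons_ne _ (fun h => hne2 h.symm)] at h0'
        exact Nat.succ_ne_zero _ h0'
      have hav : a = v1 := by simpa using hv1
      rw [hua, hav]
  · exfalso
    set i : Fin l.length := ⟨idx l u'.1, hulen⟩ with hi
    obtain ⟨j, hji, hadj⟩ := hstep i (Nat.pos_of_ne_zero h0)
    set w := l.get j with hw
    have hgi : l.get i = u'.1 := by
      simp [hi, List.get_eq_getElem, idx_eq_indexOf']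
    have hidxw : idx l w = j.1 := by
      rw [idx_eq_indexOf']
      simp only [hw, List.get_eq_getElem]
      exact List.Nodup.idxOf_getElem hnd j.1 j.isLt
    have hji' : idx l w < idx l u'.1 := by rw [hidxw]; exact hji
    have hu'A : idx l u'.1 ≤ idx l v := hA.le u'.2.1
    have hwA : w ∈ A := hA.symm.le (by exact le_trans (le_of_lt hji') hu'A)
    have hwS : w ∉ (↑S : Set V) := by
      intro hwS
      have h1 : sInf (idx l '' (↑S : Set V)) ≤ idx l w := Nat.sInf_le ⟨w, hwS, rfl⟩
      omega
    have hwAS : w ∈ A \ (↑S : Set V) := ⟨hwA, hwS⟩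
    have hadj' : (G.induce (A \ (↑S : Set V))).Adj u' ⟨w, hwAS⟩ := by
      simp only [SimpleGraph.comap_adj, Function.Embedding.coe_subtype]
      rw [← hgi]; exact hadj.symm
    have hwc : (⟨w, hwAS⟩ : ↥(A \ (↑S : Set V))) ∈ c.supp := by
      rw [SimpleGraph.ConnectedComponent.mem_supp_iff]
      rw [SimpleGraph.ConnectedComponent.mem_supp_iff] at hu'C
      rw [← hu'C]
      exact (SimpleGraph.ConnectedComponent.connectedComponentMk_eq_of_adj hadj').symm
    have : sInf (idx l '' (Subtype.val '' c.supp)) ≤ idx l w :=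
      Nat.sInf_le ⟨w, ⟨⟨w, hwAS⟩, hwc, rfl⟩, rfl⟩
    omega
end
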